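/- If L ∈ GL(n,ℝ) has all eigenvalues of the same modulus, then for every ℓ ≥ 1 the cocycle generated by L admits no ℓ-dominated splitting into nonzero invariant subspaces E ⊕ F. Prove this in the diagonalizable case: if L is diagonalizable over ℂ with all eigenvalues of modulus r > 0, then for any L-invariant decomposition ℝⁿ = E ⊕ F with E, F ≠ 0 and any ℓ ≥ 1, ‖Lˡ|_E‖ · ‖(Lˡ|_F)^{-1}‖ ≥ 1. -/

import Mathlib

open Matrix

namespace SameModulusNoDomAux

private lemma exists_eigen_vec {n : ℕ} (r : ℝ) (L : Matrix (Fin n) (Fin n) ℝ)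
    (hmod : ∀ μ : ℂ, Module.End.eigenspace
      (Matrix.toLin' (L.map (algebraMap ℝ ℂ))) μ ≠ ⊥ → ‖μ‖ = r)
    (S : Submodule ℝ (Fin n → ℝ)) (hS : S ≠ ⊥)
    (hSinv : ∀ x ∈ S, Matrix.toLin' L x ∈ S) :
    ∃ x y : Fin n → ℝ, x ∈ S ∧ y ∈ S ∧ x ≠ 0 ∧
      ∀ (k : ℕ) (j : Fin n),
        ((Matrix.toLin' L ^ k) x j) ^ 2 + ((Matrix.toLin' L ^ k) y j) ^ 2
          = (r ^ 2) ^ k * ((x j) ^ 2 + (y j) ^ 2) := by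
  set T := Matrix.toLin' L with hT
  set Tc := Matrix.toLin' (L.map (algebraMap ℝ ℂ)) with hTc
  -- commutation of real/imaginary parts
  have hre : ∀ (v : Fin n → ℂ) (j : Fin n), (Tc v j).re = T (fun i => (v i).re) j := by
    intro v j
    simp [hT, hTc, Matrix.toLin'_apply, Matrix.mulVec, dotProduct,
      Complex.re_sum, Complex.re_ofReal_mul, Matrix.map_apply]
  have him : ∀ (v : Fin n → ℂ) (j : Fin n), (Tc v j).im = T (fun i => (v i).im) j := by
    intro v j
    simp [hT, hTc, Matrix.toLin'_apply, Matrix.mulVec, dotProduct,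
      Complex.im_sum, Complex.im_ofReal_mul, Matrix.map_apply]
  -- complexification of S
  set cR : (Fin n → ℝ) → (Fin n → ℂ) := fun x => (fun j => (x j : ℂ)) with hcR
  set Sc : Submodule ℂ (Fin n → ℂ) := Submodule.span ℂ (cR '' (S : Set (Fin n → ℝ))) with hSc
  have hScne : Sc ≠ ⊥ := by
    obtain ⟨x0, hx0S, hx0⟩ := (Submodule.ne_bot_iff S).mp hS
    rw [Submodule.ne_bot_iff]
    refine ⟨cR x0, Submodule.subset_span ⟨x0, hx0S, rfl⟩, ?_⟩
    intro hc
    apply hx0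
    funext j
    have := congrFun hc j
    simpa [hcR] using congrArg Complex.re this
  have hTc_cR : ∀ s : Fin n → ℝ, Tc (cR s) = cR (T s) := by
    intro s
    funext j
    apply Complex.ext
    · rw [hre]; simp [hcR]
    · rw [him]
      have h0 : (fun i => ((cR s) i).im) = (0 : Fin n → ℝ) := by funext i; simp [hcR]
      rw [h0, map_zero]
      simp [hcR]
  have hScinv : ∀ w ∈ Sc, Tc w ∈ Sc := by
    intro w hw
    induction hw using Submodule.span_induction with
    | mem w hw =>
        obtain ⟨s, hsS, rfl⟩ := hw
        rw [hTc_cR]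
        exact Submodule.subset_span ⟨T s, hSinv s hsS, rfl⟩
    | zero => simp
    | add u v hu hv ihu ihv => rw [map_add]; exact Sc.add_mem ihu ihv
    | smul c u hu ih => rw [LinearMap.map_smul]; exact Sc.smul_mem c ih
  -- real and imaginary parts of members of Sc lie in S
  have hmem : ∀ w ∈ Sc, (fun j => (w j).re) ∈ S ∧ (fun j => (w j).im) ∈ S := by
    intro w hw
    induction hw using Submodule.span_induction with
    | mem w hw =>
        obtain ⟨s, hsS, rfl⟩ := hw
        constructor
        · simpa [hcR] using hsS
        · have h0 : (fun j => ((cR s) j).im) = 0 := by funext j; simp [hcR]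
          rw [h0]; exact S.zero_mem
    | zero => constructor <;> exact S.zero_mem
    | add u v hu hv ihu ihv =>
        constructor
        · have : (fun j => ((u + v) j).re) =
            (fun j => (u j).re) + (fun j => (v j).re) := by funext j; simp
          rw [this]; exact S.add_mem ihu.1 ihv.1
        · have : (fun j => ((u + v) j).im) =
            (fun j => (u j).im) + (fun j => (v j).im) := by funext j; simp
          rw [this]; exact S.add_mem ihu.2 ihv.2
    | smul c u hu ih =>
        constructor
        · have : (fun j => ((c • u) j).re) =
            c.re • (fun j => (u j).re) - c.im • (fun j => (u j).im) := by
            funext j; simp [Complex.mul_re]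
          rw [this]; exact S.sub_mem (S.smul_mem _ ih.1) (S.smul_mem _ ih.2)
        · have : (fun j => ((c • u) j).im) =
            c.re • (fun j => (u j).im) + c.im • (fun j => (u j).re) := by
            funext j; simp [Complex.mul_im]
          rw [this]; exact S.add_mem (S.smul_mem _ ih.2) (S.smul_mem _ ih.1)
  -- eigenvector of the restriction
  haveI : Nontrivial Sc := Submodule.nontrivial_iff_ne_bot.mpr hScne
  set g : Module.End ℂ Sc := Tc.restrict hScinv with hg
  obtain ⟨μ, hμ⟩ := Module.End.exists_eigenvalue g
  obtain ⟨w', hw'⟩ := hμ.exists_hasEigenvector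
  set w : Fin n → ℂ := (w' : Fin n → ℂ) with hw
  have hwSc : w ∈ Sc := w'.2
  have hwne : w ≠ 0 := fun hc => hw'.2 (by exact_mod_cast Subtype.ext hc)
  have heig : Tc w = μ • w := by
    have := Module.End.mem_eigenspace_iff.mp hw'.1
    have := congrArg (Subtype.val) this
    simpa [hg, hw, LinearMap.restrict_coe_apply] using this
  -- |μ| = r
  have habs : ‖μ‖ = r := by
    apply hmod
    rw [Submodule.ne_bot_iff]
    exact ⟨w, Module.End.mem_eigenspace_iff.mpr heig, hwne⟩
  -- iterate
  have hpow : ∀ k : ℕ, (Tc ^ k) w = (μ ^ k) • w := by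
    intro k
    induction k with
    | zero => simp
    | succ k ih =>
        rw [pow_succ', Module.End.mul_apply, ih, LinearMap.map_smul, heig, smul_smul,
          ← pow_succ]
  set x : Fin n → ℝ := fun j => (w j).re with hx
  set y : Fin n → ℝ := fun j => (w j).im with hy
  have hxy := hmem w hwSc
  have hkey : ∀ k : ℕ, ((T ^ k) x = fun j => (((Tc ^ k) w) j).re)
      ∧ ((T ^ k) y = fun j => (((Tc ^ k) w) j).im) := by
    intro k
    induction k with
    | zero => exact ⟨rfl, rfl⟩
    | succ k ih =>
        have hstepc : (Tc ^ (k + 1)) w = Tc ((Tc ^ k) w) := by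
          rw [pow_succ', Module.End.mul_apply]
        constructor
        · rw [pow_succ', Module.End.mul_apply, ih.1, hstepc]
          funext j
          exact (hre ((Tc ^ k) w) j).symm
        · rw [pow_succ', Module.End.mul_apply, ih.2, hstepc]
          funext j
          exact (him ((Tc ^ k) w) j).symm
  have hident : ∀ (k : ℕ) (j : Fin n),
      ((T ^ k) x j) ^ 2 + ((T ^ k) y j) ^ 2 = (r ^ 2) ^ k * ((x j) ^ 2 + (y j) ^ 2) := by
    intro k j
    have h1 : (T ^ k) x j = ((μ ^ k) * w j).re := by
      rw [congrFun (hkey k).1 j, hpow k]; simp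
    have h2 : (T ^ k) y j = ((μ ^ k) * w j).im := by
      rw [congrFun (hkey k).2 j, hpow k]; simp
    rw [h1, h2]
    have hns : ((μ ^ k) * w j).re ^ 2 + ((μ ^ k) * w j).im ^ 2
        = Complex.normSq ((μ ^ k) * w j) := by
      rw [Complex.normSq_apply]; ring
    rw [hns, Complex.normSq_mul, map_pow]
    have hnsq : Complex.normSq μ = r ^ 2 := by
      rw [← Complex.sq_norm, habs]
    have hxj : x j = (w j).re := rfl
    have hyj : y j = (w j).im := rfl
    rw [hnsq, Complex.normSq_apply, hxj, hyj]
    ring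
  by_cases hxne : x = 0
  · have hyne : y ≠ 0 := by
      intro hyz
      apply hwne
      funext j
      apply Complex.ext
      · simpa [hx] using congrFun hxne j
      · simpa [hy] using congrFun hyz j
    refine ⟨y, x, hxy.2, hxy.1, hyne, ?_⟩
    intro k j
    have := hident k j
    linarith
  · exact ⟨x, y, hxy.1, hxy.2, hxne, hident⟩

private lemma pow_mem {n : ℕ} {S : Submodule ℝ (Fin n → ℝ)}
    {T : (Fin n → ℝ) →ₗ[ℝ] (Fin n → ℝ)}
    (hinv : ∀ x ∈ S, T x ∈ S) : ∀ (k : ℕ), ∀ x ∈ S, (T ^ k) x ∈ S := by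
  intro k
  induction k with
  | zero => intro x hx; simpa using hx
  | succ k ih =>
      intro x hx
      rw [pow_succ, Module.End.mul_apply]
      exact ih _ (hinv x hx)

private lemma ratio_le {c d A B : ℝ} (hc : 0 < c) (hA : 0 < A)
    (h : ∀ k : ℕ, c ^ k * A ≤ d ^ k * B) : c ≤ d := by
  have h1 : c * A ≤ d * B := by simpa using h 1
  have h2 : c ^ 2 * A ≤ d ^ 2 * B := h 2
  have hd : 0 < d := by
    by_contra hd
    push_neg at hd
    rcases lt_or_eq_of_le hd with hd' | hd'
    · nlinarith [mul_pos hc hA, sq_nonneg c, mul_pos (mul_pos hc hc) hA]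
    · subst hd'; nlinarith [mul_pos hc hA]
  by_contra hcd
  push_neg at hcd
  have hone : 1 < c / d := (one_lt_div hd).mpr hcd
  obtain ⟨k, hk⟩ := pow_unbounded_of_one_lt (B / A) hone
  have hk' : (c / d) ^ k ≤ B / A := by
    rw [div_pow, div_le_div_iff₀ (pow_pos hd k) hA]
    calc c ^ k * A ≤ d ^ k * B := h k
    _ = B * d ^ k := by ring
  exact absurd (hk.trans_le hk') (lt_irrefl _)

private lemma coord_sq_le_norm_sq {n : ℕ} (v : Fin n → ℝ) (i : Fin n) :
    (v i) ^ 2 ≤ ‖v‖ ^ 2 := by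
  have h := norm_le_pi_norm v i
  rw [Real.norm_eq_abs] at h
  nlinarith [abs_nonneg (v i), sq_abs (v i), norm_nonneg v]

private lemma r_pow_le {n : ℕ} {r a : ℝ} (hr : 0 < r) {L : Matrix (Fin n) (Fin n) ℝ}
    (hmod : ∀ μ : ℂ, Module.End.eigenspace
      (Matrix.toLin' (L.map (algebraMap ℝ ℂ))) μ ≠ ⊥ → ‖μ‖ = r)
    {S : Submodule ℝ (Fin n → ℝ)} (hS : S ≠ ⊥)
    (hSinv : ∀ x ∈ S, Matrix.toLin' L x ∈ S) (ℓ : ℕ)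
    (hbound : ∀ u ∈ S, ‖((Matrix.toLin' L) ^ ℓ) u‖ ≤ a * ‖u‖) :
    r ^ ℓ ≤ a := by
  obtain ⟨x, y, hxS, hyS, hxne, hkey⟩ := exists_eigen_vec r L hmod S hS hSinv
  set T := Matrix.toLin' L with hT
  have hxpos : 0 < ‖x‖ := norm_pos_iff.mpr hxne
  have ha : 0 ≤ a := by
    have h := hbound x hxS
    nlinarith [norm_nonneg ((T ^ ℓ) x)]
  have hiter : ∀ k : ℕ, ∀ u ∈ S, ‖((T ^ ℓ) ^ k) u‖ ≤ a ^ k * ‖u‖ := by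
    intro k
    induction k with
    | zero => intro u hu; simp
    | succ k ih =>
        intro u hu
        rw [pow_succ, Module.End.mul_apply]
        calc ‖((T ^ ℓ) ^ k) ((T ^ ℓ) u)‖ ≤ a ^ k * ‖(T ^ ℓ) u‖ :=
              ih _ (pow_mem hSinv ℓ u hu)
          _ ≤ a ^ k * (a * ‖u‖) :=
              mul_le_mul_of_nonneg_left (hbound u hu) (pow_nonneg ha k)
          _ = a ^ (k + 1) * ‖u‖ := by ring
  obtain ⟨i, hi⟩ := Function.ne_iff.mp hxne
  have hi' : x i ≠ 0 := by simpa using hi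
  have hApos : 0 < (x i) ^ 2 + (y i) ^ 2 := by
    have h1 : 0 < (x i) ^ 2 :=
      lt_of_le_of_ne (sq_nonneg _) (Ne.symm (pow_ne_zero 2 hi'))
    nlinarith [sq_nonneg (y i)]
  have hmain : ∀ k : ℕ, ((r ^ 2) ^ ℓ) ^ k * ((x i) ^ 2 + (y i) ^ 2)
      ≤ (a ^ 2) ^ k * (‖x‖ ^ 2 + ‖y‖ ^ 2) := by
    intro k
    have hk := hkey (ℓ * k) i
    rw [pow_mul] at hk
    have hb1 := hiter k x hxS
    have hb2 := hiter k y hyS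
    have hc1 := coord_sq_le_norm_sq (((T ^ ℓ) ^ k) x) i
    have hc2 := coord_sq_le_norm_sq (((T ^ ℓ) ^ k) y) i
    have d1 : ‖((T ^ ℓ) ^ k) x‖ ^ 2 ≤ (a ^ k * ‖x‖) ^ 2 := by
      nlinarith [norm_nonneg (((T ^ ℓ) ^ k) x), norm_nonneg x, pow_nonneg ha k]
    have d2 : ‖((T ^ ℓ) ^ k) y‖ ^ 2 ≤ (a ^ k * ‖y‖) ^ 2 := by
      nlinarith [norm_nonneg (((T ^ ℓ) ^ k) y), norm_nonneg y, pow_nonneg ha k]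
    have e2 : ((r ^ 2) ^ ℓ) ^ k = (r ^ 2) ^ (ℓ * k) := by rw [← pow_mul]
    have e3 : (a ^ 2) ^ k = (a ^ k) ^ 2 := by rw [← pow_mul, ← pow_mul, mul_comm]
    rw [e2, e3]
    nlinarith [hk, hc1, hc2, d1, d2]
  have hfin : (r ^ 2) ^ ℓ ≤ a ^ 2 :=
    ratio_le (pow_pos (pow_pos hr 2) ℓ) hApos hmain
  have e4 : (r ^ 2) ^ ℓ = (r ^ ℓ) ^ 2 := by
    rw [← pow_mul, ← pow_mul, mul_comm]
  rw [e4] at hfin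
  nlinarith [pow_pos hr ℓ]

private lemma le_r_pow {n : ℕ} {r b : ℝ} (hr : 0 < r) {L : Matrix (Fin n) (Fin n) ℝ}
    (hmod : ∀ μ : ℂ, Module.End.eigenspace
      (Matrix.toLin' (L.map (algebraMap ℝ ℂ))) μ ≠ ⊥ → ‖μ‖ = r)
    {S : Submodule ℝ (Fin n → ℝ)} (hS : S ≠ ⊥)
    (hSinv : ∀ x ∈ S, Matrix.toLin' L x ∈ S) (ℓ : ℕ)
    (hbound : ∀ v ∈ S, b * ‖v‖ ≤ ‖((Matrix.toLin' L) ^ ℓ) v‖) :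
    b ≤ r ^ ℓ := by
  rcases le_or_gt b 0 with hb | hb
  · exact hb.trans (pow_pos hr ℓ).le
  obtain ⟨x, y, hxS, hyS, hxne, hkey⟩ := exists_eigen_vec r L hmod S hS hSinv
  set T := Matrix.toLin' L with hT
  have hxpos : 0 < ‖x‖ := norm_pos_iff.mpr hxne
  have hiter : ∀ k : ℕ, ∀ v ∈ S, b ^ k * ‖v‖ ≤ ‖((T ^ ℓ) ^ k) v‖ := by
    intro k
    induction k with
    | zero => intro v hv; simp
    | succ k ih =>
        intro v hv
        rw [pow_succ (T ^ ℓ) k, Module.End.mul_apply]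
        calc b ^ (k + 1) * ‖v‖ = b ^ k * (b * ‖v‖) := by ring
          _ ≤ b ^ k * ‖(T ^ ℓ) v‖ :=
              mul_le_mul_of_nonneg_left (hbound v hv) (pow_nonneg hb.le k)
          _ ≤ ‖((T ^ ℓ) ^ k) ((T ^ ℓ) v)‖ := ih _ (pow_mem hSinv ℓ v hv)
  have hup : ∀ k : ℕ, ‖((T ^ ℓ) ^ k) x‖ ^ 2
      ≤ ((r ^ 2) ^ ℓ) ^ k * (‖x‖ ^ 2 + ‖y‖ ^ 2) := by
    intro k
    set C := ((r ^ 2) ^ ℓ) ^ k * (‖x‖ ^ 2 + ‖y‖ ^ 2) with hC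
    have hC0 : 0 ≤ C := by positivity
    have hnorm : ‖((T ^ ℓ) ^ k) x‖ ≤ Real.sqrt C := by
      rw [pi_norm_le_iff_of_nonneg (Real.sqrt_nonneg C)]
      intro i
      rw [Real.norm_eq_abs]
      apply Real.abs_le_sqrt
      have hk := hkey (ℓ * k) i
      rw [pow_mul] at hk
      have e2 : ((r ^ 2) ^ ℓ) ^ k = (r ^ 2) ^ (ℓ * k) := by rw [← pow_mul]
      have hx2 := coord_sq_le_norm_sq x i
      have hy2 := coord_sq_le_norm_sq y i
      have hr2 : (0:ℝ) < (r ^ 2) ^ (ℓ * k) := pow_pos (pow_pos hr 2) _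
      have hsq : 0 ≤ (((T ^ ℓ) ^ k) y i) ^ 2 := sq_nonneg _
      rw [hC, e2]
      nlinarith
    nlinarith [Real.sq_sqrt hC0, norm_nonneg (((T ^ ℓ) ^ k) x), Real.sqrt_nonneg C]
  have hmain : ∀ k : ℕ, (b ^ 2) ^ k * ‖x‖ ^ 2
      ≤ ((r ^ 2) ^ ℓ) ^ k * (‖x‖ ^ 2 + ‖y‖ ^ 2) := by
    intro k
    have h1 := hiter k x hxS
    have h2 := hup k
    have e3 : (b ^ 2) ^ k = (b ^ k) ^ 2 := by
      rw [← pow_mul, ← pow_mul, mul_comm]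
    rw [e3]
    nlinarith [norm_nonneg (((T ^ ℓ) ^ k) x), pow_nonneg hb.le k, hxpos.le,
      mul_nonneg (pow_nonneg hb.le k) hxpos.le]
  have hfin : b ^ 2 ≤ (r ^ 2) ^ ℓ :=
    ratio_le (pow_pos hb 2) (by positivity) hmain
  have e4 : (r ^ 2) ^ ℓ = (r ^ ℓ) ^ 2 := by
    rw [← pow_mul, ← pow_mul, mul_comm]
  rw [e4] at hfin
  nlinarith [pow_pos hr ℓ]

end SameModulusNoDomAux

/-- If `L` is diagonalizable over `ℂ` with all eigenvalues of the same modulus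
`r > 0`, then for any `L`-invariant decomposition `ℝⁿ = E ⊕ F` with `E, F ≠ 0`
and any `ℓ ≥ 1` one has `‖Lˡ|_E‖ · ‖(Lˡ|_F)⁻¹‖ ≥ 1`; equivalently there are
unit vectors `u ∈ E`, `v ∈ F` with `‖Lˡ v‖ ≤ ‖Lˡ u‖`.  In particular no
`ℓ`-dominated splitting exists. -/
theorem same_modulus_no_domination
    {n : ℕ} (r : ℝ) (hr : 0 < r) (L : Matrix (Fin n) (Fin n) ℝ)
    (hdiag : ⨆ μ : ℂ, Module.End.eigenspace
      (Matrix.toLin' (L.map (algebraMap ℝ ℂ))) μ = ⊤)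
    (hmod : ∀ μ : ℂ, Module.End.eigenspace
      (Matrix.toLin' (L.map (algebraMap ℝ ℂ))) μ ≠ ⊥ → ‖μ‖ = r)
    (E F : Submodule ℝ (Fin n → ℝ)) (hE : E ≠ ⊥) (hF : F ≠ ⊥)
    (hcompl : IsCompl E F)
    (hEinv : ∀ x ∈ E, Matrix.toLin' L x ∈ E)
    (hFinv : ∀ x ∈ F, Matrix.toLin' L x ∈ F)
    (ℓ : ℕ) (hℓ : 1 ≤ ℓ) :
    ∃ u ∈ E, ∃ v ∈ F, ‖u‖ = 1 ∧ ‖v‖ = 1 ∧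
      ‖((Matrix.toLin' L) ^ ℓ) v‖ ≤ ‖((Matrix.toLin' L) ^ ℓ) u‖ := by
  by_contra hcon
  push_neg at hcon
  set T := Matrix.toLin' L with hT
  set P := T ^ ℓ with hP
  have hPc : Continuous P := P.continuous_of_finiteDimensional
  obtain ⟨x0, hx0E, hx0⟩ := (Submodule.ne_bot_iff E).mp hE
  obtain ⟨y0, hy0F, hy0⟩ := (Submodule.ne_bot_iff F).mp hF
  have hsetE : {u : Fin n → ℝ | u ∈ E ∧ ‖u‖ = 1}
      = (E : Set (Fin n → ℝ)) ∩ Metric.sphere 0 1 := by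
    ext u; simp [mem_sphere_zero_iff_norm]
  have hsetF : {v : Fin n → ℝ | v ∈ F ∧ ‖v‖ = 1}
      = (F : Set (Fin n → ℝ)) ∩ Metric.sphere 0 1 := by
    ext v; simp [mem_sphere_zero_iff_norm]
  have hcompE : IsCompact {u : Fin n → ℝ | u ∈ E ∧ ‖u‖ = 1} := by
    rw [hsetE]
    exact (isCompact_sphere 0 1).inter_left E.closed_of_finiteDimensional
  have hcompF : IsCompact {v : Fin n → ℝ | v ∈ F ∧ ‖v‖ = 1} := by
    rw [hsetF]
    exact (isCompact_sphere 0 1).inter_left F.closed_of_finiteDimensional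
  have hneE : {u : Fin n → ℝ | u ∈ E ∧ ‖u‖ = 1}.Nonempty :=
    ⟨‖x0‖⁻¹ • x0, E.smul_mem _ hx0E, by
      rw [norm_smul, norm_inv, norm_norm,
        inv_mul_cancel₀ (norm_ne_zero_iff.mpr hx0)]⟩
  have hneF : {v : Fin n → ℝ | v ∈ F ∧ ‖v‖ = 1}.Nonempty :=
    ⟨‖y0‖⁻¹ • y0, F.smul_mem _ hy0F, by
      rw [norm_smul, norm_inv, norm_norm,
        inv_mul_cancel₀ (norm_ne_zero_iff.mpr hy0)]⟩
  obtain ⟨u₀, hu₀, hmax⟩ := hcompE.exists_isMaxOn hneE (hPc.norm.continuousOn)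
  obtain ⟨v₀, hv₀, hmin⟩ := hcompF.exists_isMinOn hneF (hPc.norm.continuousOn)
  have hab : ‖P u₀‖ < ‖P v₀‖ := hcon u₀ hu₀.1 v₀ hv₀.1 hu₀.2 hv₀.2
  have hEb : ∀ u ∈ E, ‖P u‖ ≤ ‖P u₀‖ * ‖u‖ := by
    intro u huE
    rcases eq_or_ne u 0 with rfl | hu0
    · simp
    · have hnu : ‖u‖ ≠ 0 := norm_ne_zero_iff.mpr hu0
      have hupos : 0 < ‖u‖ := (norm_nonneg u).lt_of_ne (Ne.symm hnu)
      have hmem : ‖u‖⁻¹ • u ∈ {u : Fin n → ℝ | u ∈ E ∧ ‖u‖ = 1} :=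
        ⟨E.smul_mem _ huE, by
          rw [norm_smul, norm_inv, norm_norm, inv_mul_cancel₀ hnu]⟩
      have hle := hmax hmem
      simp only [Set.mem_setOf_eq] at hle
      rw [LinearMap.map_smul, norm_smul, norm_inv, norm_norm] at hle
      calc ‖P u‖ = ‖u‖ * (‖u‖⁻¹ * ‖P u‖) := by field_simp
        _ ≤ ‖u‖ * ‖P u₀‖ := mul_le_mul_of_nonneg_left hle hupos.le
        _ = ‖P u₀‖ * ‖u‖ := by ring
  have hFb : ∀ v ∈ F, ‖P v₀‖ * ‖v‖ ≤ ‖P v‖ := by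
    intro v hvF
    rcases eq_or_ne v 0 with rfl | hv0
    · simp
    · have hnv : ‖v‖ ≠ 0 := norm_ne_zero_iff.mpr hv0
      have hvpos : 0 < ‖v‖ := (norm_nonneg v).lt_of_ne (Ne.symm hnv)
      have hmem : ‖v‖⁻¹ • v ∈ {v : Fin n → ℝ | v ∈ F ∧ ‖v‖ = 1} :=
        ⟨F.smul_mem _ hvF, by
          rw [norm_smul, norm_inv, norm_norm, inv_mul_cancel₀ hnv]⟩
      have hle := hmin hmem
      simp only [Set.mem_setOf_eq] at hle
      rw [LinearMap.map_smul, norm_smul, norm_inv, norm_norm] at hle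
      calc ‖P v₀‖ * ‖v‖ = ‖v‖ * ‖P v₀‖ := by ring
        _ ≤ ‖v‖ * (‖v‖⁻¹ * ‖P v‖) := mul_le_mul_of_nonneg_left hle hvpos.le
        _ = ‖P v‖ := by field_simp
  have h1 : r ^ ℓ ≤ ‖P u₀‖ :=
    SameModulusNoDomAux.r_pow_le hr hmod hE hEinv ℓ hEb
  have h2 : ‖P v₀‖ ≤ r ^ ℓ :=
    SameModulusNoDomAux.le_r_pow hr hmod hF hFinv ℓ hFb
  linarith
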